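/- Detail-energy control with coarse-to-detail forcing (Proposition 'Detail-energy control with coarse-to-detail forcing'): let M : H → H be linear, b ∈ H, σ ≥ 0, and w, w' ∈ [0,1]. Let X, η : Ω → H be square-integrable random matrices on a probability space (Ω, F, P) such that η is independent of X and E[η] = 0. Define the updated state X' := M(A_w X) + b + σ·A_{w'} η, and let κ and ρ be any real numbers with ‖Q_d(M(Q_c z))‖₂ ≤ κ‖Q_c z‖₂ and ‖Q_d(M(Q_d z))‖₂ ≤ ρ‖Q_d z‖₂ for all z ∈ H. Then E[‖Q_d X'‖₂²] ≤ 3κ²·E[‖Q_c X‖₂²] + 3ρ²·(1−w)²·E[‖Q_d X‖₂²] + 3‖Q_d b‖₂² + σ²·(1−w')²·E[‖Q_d η‖₂²]. -/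

import Mathlib

open scoped BigOperators
open MeasureTheory

namespace Stroke

/-- The space of real `(m·k) × (n·k)` matrices, as functions on index pairs. -/
abbrev H (m n k : ℕ) : Type := Fin (m * k) → Fin (n * k) → ℝ

/-- The grid index `(i/k)·k + r`, i.e. the `r`-th index inside the block containing `i`. -/
def blk (d k : ℕ) (i : Fin (d * k)) (r : Fin k) : Fin (d * k) :=
  ⟨i.val / k * k + r.val, by
    have hk : 0 < k := r.pos
    have h1 : i.val / k < d := (Nat.div_lt_iff_lt_mul hk).mpr i.isLt
    calc i.val / k * k + r.val < i.val / k * k + k := Nat.add_lt_add_left r.isLt _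
      _ = (i.val / k + 1) * k := by ring
      _ ≤ d * k := Nat.mul_le_mul (Nat.succ_le_of_lt h1) le_rfl⟩

/-- The stroke operator `S_k`: average pooling over each `k × k` block followed by
nearest-neighbor upsampling, i.e. every entry of block `B_{p,q}` is replaced by the
block average. -/
noncomputable def S {m n k : ℕ} (x : H m n k) : H m n k :=
  fun i j => (1 / (k : ℝ) ^ 2) *
    ∑ r1 : Fin k, ∑ r2 : Fin k, x (blk m k i r1) (blk n k j r2)

/-- The inner product `⟨x,y⟩ = ∑_{i,j} x[i,j]·y[i,j]` on `H`. -/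
def ip {m n k : ℕ} (x y : H m n k) : ℝ := ∑ i, ∑ j, x i j * y i j

/-- The norm `‖x‖₂ = √⟨x,x⟩` on `H`. -/
noncomputable def norm2 {m n k : ℕ} (x : H m n k) : ℝ := Real.sqrt (ip x x)

/-- The stroke mixing map `A_w = (1-w)·id + w·S_k`. -/
noncomputable def A {m n k : ℕ} (w : ℝ) (x : H m n k) : H m n k :=
  (1 - w) • x + w • S x

/-- The coarse projection `Q_c = S_k`. -/
noncomputable def Qc {m n k : ℕ} (x : H m n k) : H m n k := S x

/-- The detail projection `Q_d = id - S_k`. -/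
noncomputable def Qd {m n k : ℕ} (x : H m n k) : H m n k := x - S x

/-- A matrix is block-constant if it is constant on each block `B_{p,q}`. -/
def BlockConst {m n k : ℕ} (v : H m n k) : Prop :=
  ∀ (i i' : Fin (m * k)) (j j' : Fin (n * k)),
    i.val / k = i'.val / k → j.val / k = j'.val / k → v i j = v i' j'


-- basic lemmas
lemma blk_div {d k : ℕ} (i : Fin (d * k)) (r : Fin k) :
    (blk d k i r).val / k = i.val / k := by
  have hk : 0 < k := r.pos
  simp only [blk]
  have : i.val / k * k + r.val = k * (i.val / k) + r.val := by ring
  rw [this, Nat.mul_add_div hk, Nat.div_eq_of_lt r.isLt, add_zero]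


lemma blk_blk {d k : ℕ} (i : Fin (d * k)) (r s : Fin k) :
    blk d k (blk d k i r) s = blk d k i s := by
  have h := blk_div i r
  apply Fin.ext
  show (blk d k i r).val / k * k + s.val = i.val / k * k + s.val
  rw [h]

lemma S_blk {m n k : ℕ} (x : H m n k) (i : Fin (m * k)) (j : Fin (n * k))
    (r1 r2 : Fin k) : S x (blk m k i r1) (blk n k j r2) = S x i j := by
  simp only [S, blk_blk]

lemma S_S {m n k : ℕ} (hk : 0 < k) (x : H m n k) : S (S x) = S x := by
  funext i j
  have hk' : (k : ℝ) ≠ 0 := Nat.cast_ne_zero.mpr hk.ne'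
  show (1 / (k:ℝ)^2) * ∑ r1 : Fin k, ∑ r2 : Fin k, S x (blk m k i r1) (blk n k j r2) = S x i j
  simp only [S_blk]
  show (1 / (k:ℝ)^2) * ∑ _r1 : Fin k, ∑ _r2 : Fin k, S x i j = S x i j
  simp [Finset.sum_const, hk']
  field_simp

lemma S_add {m n k : ℕ} (x y : H m n k) : S (x + y) = S x + S y := by
  funext i j
  simp only [S, Pi.add_apply, Finset.sum_add_distrib, mul_add]

lemma S_smul {m n k : ℕ} (c : ℝ) (x : H m n k) : S (c • x) = c • S x := by
  funext i j
  simp only [S, Pi.smul_apply, smul_eq_mul, ← Finset.mul_sum]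
  ring


-- Qd / Qc / A algebra
lemma Qd_add {m n k : ℕ} (x y : H m n k) : Qd (x + y) = Qd x + Qd y := by
  simp only [Qd, S_add]; abel

lemma Qd_smul {m n k : ℕ} (c : ℝ) (x : H m n k) : Qd (c • x) = c • Qd x := by
  simp only [Qd, S_smul, smul_sub]

lemma Qd_A {m n k : ℕ} (hk : 0 < k) (w : ℝ) (x : H m n k) :
    Qd (A w x) = (1 - w) • Qd x := by
  simp only [Qd, A, S_add, S_smul, S_S hk, smul_sub]
  abel

lemma A_eq {m n k : ℕ} (w : ℝ) (x : H m n k) :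
    A w x = Qc x + (1 - w) • Qd x := by
  simp only [A, Qc, Qd, smul_sub]
  module

-- bundled linear maps
noncomputable def SL (m n k : ℕ) : H m n k →ₗ[ℝ] H m n k where
  toFun := S
  map_add' := S_add
  map_smul' := S_smul

noncomputable def QdL (m n k : ℕ) : H m n k →ₗ[ℝ] H m n k :=
  LinearMap.id - SL m n k

lemma QdL_apply {m n k : ℕ} (x : H m n k) : QdL m n k x = Qd x := rfl

-- Euclidean space model
noncomputable def toE {m n k : ℕ} (x : H m n k) :
    EuclideanSpace ℝ (Fin (m * k) × Fin (n * k)) :=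
  WithLp.toLp 2 (fun p : Fin (m * k) × Fin (n * k) => x p.1 p.2)

lemma toE_add {m n k : ℕ} (x y : H m n k) : toE (x + y) = toE x + toE y := rfl
lemma toE_smul {m n k : ℕ} (c : ℝ) (x : H m n k) : toE (c • x) = c • toE x := rfl

lemma norm2_eq {m n k : ℕ} (x : H m n k) : norm2 x = ‖toE x‖ := by
  rw [EuclideanSpace.norm_eq]
  unfold norm2 ip
  congr 1
  rw [Fintype.sum_prod_type]
  refine Finset.sum_congr rfl fun i _ => Finset.sum_congr rfl fun j _ => ?_
  simp [toE, Real.norm_eq_abs, sq, abs_mul_abs_self]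

lemma ip_eq {m n k : ℕ} (x y : H m n k) : ip x y = inner ℝ (toE x) (toE y) := by
  rw [PiLp.inner_apply]
  unfold ip
  rw [Fintype.sum_prod_type]
  refine Finset.sum_congr rfl fun i _ => Finset.sum_congr rfl fun j _ => ?_
  simp [toE, mul_comm]

lemma norm2_nonneg {m n k : ℕ} (x : H m n k) : 0 ≤ norm2 x := Real.sqrt_nonneg _

lemma norm2_add_le {m n k : ℕ} (x y : H m n k) :
    norm2 (x + y) ≤ norm2 x + norm2 y := by
  simp only [norm2_eq, toE_add]; exact norm_add_le _ _

lemma norm2_smul {m n k : ℕ} (c : ℝ) (x : H m n k) :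
    norm2 (c • x) = |c| * norm2 x := by
  simp only [norm2_eq, toE_smul, norm_smul, Real.norm_eq_abs]

lemma norm2_sq_add {m n k : ℕ} (x y : H m n k) :
    norm2 (x + y) ^ 2 = norm2 x ^ 2 + 2 * ip x y + norm2 y ^ 2 := by
  simp only [norm2_eq, toE_add, ip_eq]
  rw [← real_inner_self_eq_norm_sq, ← real_inner_self_eq_norm_sq,
    ← real_inner_self_eq_norm_sq, inner_add_add_self]
  ring_nf
  rw [real_inner_comm (toE y) (toE x)]
  ring

lemma norm2_sq_eq_sum {m n k : ℕ} (x : H m n k) :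
    norm2 x ^ 2 = ∑ i, ∑ j, x i j ^ 2 := by
  have h : 0 ≤ ip x x := by
    unfold ip
    exact Finset.sum_nonneg fun i _ => Finset.sum_nonneg fun j _ => mul_self_nonneg _
  rw [norm2, Real.sq_sqrt h]
  unfold ip
  simp [sq]


section Prob

set_option linter.unusedSectionVars false

variable {m n k : ℕ} {Ω : Type*} [MeasurableSpace Ω] (P : Measure Ω) [IsProbabilityMeasure P]

lemma memℒp_comp_lm {E F : Type*} [NormedAddCommGroup E] [NormedSpace ℝ E]
    [NormedAddCommGroup F] [NormedSpace ℝ F] [FiniteDimensional ℝ E]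
    {f : Ω → E} (hf : MemLp f 2 P) (T : E →ₗ[ℝ] F) :
    MemLp (fun ω => T (f ω)) 2 P :=
  (LinearMap.toContinuousLinearMap T).comp_memLp' hf

/-- evaluation at (i,j) as a linear map -/
noncomputable def evalLM (m n k : ℕ) (i : Fin (m * k)) (j : Fin (n * k)) : H m n k →ₗ[ℝ] ℝ :=
  (LinearMap.proj (R := ℝ) (φ := fun _ : Fin (n * k) => ℝ) j).comp
    (LinearMap.proj (R := ℝ) (φ := fun _ : Fin (m * k) => Fin (n * k) → ℝ) i)

lemma evalLM_apply {m n k : ℕ} (i : Fin (m * k)) (j : Fin (n * k)) (x : H m n k) :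
    evalLM m n k i j x = x i j := rfl

lemma integrable_norm2_sq {f : Ω → H m n k} (hf : MemLp f 2 P) :
    Integrable (fun ω => norm2 (f ω) ^ 2) P := by
  have h : (fun ω => norm2 (f ω) ^ 2) = fun ω => ∑ i, ∑ j, (f ω i j) ^ 2 :=
    funext fun ω => norm2_sq_eq_sum _
  rw [h]
  refine integrable_finset_sum _ fun i _ => integrable_finset_sum _ fun j _ => ?_
  have := (memℒp_comp_lm P hf (evalLM m n k i j)).integrable_sq
  simpa [evalLM_apply] using this

end Prob


/-- detail-energy control with coarse-to-detail forcing. Under the affine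
surrogate update `X' = M(A_w X) + b + σ·A_{w'} η` with `η` independent of `X`,
`E[η] = 0`, and operator-norm-type bounds `‖Q_d(M(Q_c z))‖₂ ≤ κ‖Q_c z‖₂` and
`‖Q_d(M(Q_d z))‖₂ ≤ ρ‖Q_d z‖₂`, one has
`E[‖Q_d X'‖₂²] ≤ 3κ²·E[‖Q_c X‖₂²] + 3ρ²(1−w)²·E[‖Q_d X‖₂²] + 3‖Q_d b‖₂²
  + σ²(1−w')²·E[‖Q_d η‖₂²]`. -/
theorem detail_energy_control {m n k : ℕ}
    (hm : 0 < m) (hn : 0 < n) (hk : 0 < k)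
    {Ω : Type*} [MeasurableSpace Ω] (P : Measure Ω) [IsProbabilityMeasure P]
    (M : H m n k →ₗ[ℝ] H m n k) (b : H m n k) (σ w w' : ℝ)
    (hσ : 0 ≤ σ) (hw0 : 0 ≤ w) (hw1 : w ≤ 1) (hw'0 : 0 ≤ w') (hw'1 : w' ≤ 1)
    (X η : Ω → H m n k) (hX : MemLp X 2 P) (hη : MemLp η 2 P)
    (hindep : ProbabilityTheory.IndepFun η X P)
    (hη0 : ∫ ω, η ω ∂P = 0)
    (κ ρ : ℝ)
    (hκ : ∀ z : H m n k, norm2 (Qd (M (Qc z))) ≤ κ * norm2 (Qc z))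
    (hρ : ∀ z : H m n k, norm2 (Qd (M (Qd z))) ≤ ρ * norm2 (Qd z)) :
    ∫ ω, norm2 (Qd (M (A w (X ω)) + b + σ • A w' (η ω))) ^ 2 ∂P
      ≤ 3 * κ ^ 2 * ∫ ω, norm2 (Qc (X ω)) ^ 2 ∂P
        + 3 * ρ ^ 2 * (1 - w) ^ 2 * ∫ ω, norm2 (Qd (X ω)) ^ 2 ∂P
        + 3 * norm2 (Qd b) ^ 2
        + σ ^ 2 * (1 - w') ^ 2 * ∫ ω, norm2 (Qd (η ω)) ^ 2 ∂P := by
  classical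
  set TU : H m n k →ₗ[ℝ] H m n k :=
    ((QdL m n k) ∘ₗ M ∘ₗ (SL m n k)) + (1 - w) • ((QdL m n k) ∘ₗ M ∘ₗ (QdL m n k)) with hTU
  set TV : H m n k →ₗ[ℝ] H m n k := (σ * (1 - w')) • QdL m n k with hTV
  set U : Ω → H m n k := fun ω => TU (X ω) + Qd b with hU
  set V : Ω → H m n k := fun ω => TV (η ω) with hV
  have hUdef : ∀ x : H m n k, TU x = Qd (M (Qc x)) + (1 - w) • Qd (M (Qd x)) :=
    fun x => rfl
  have hVdef : ∀ y : H m n k, TV y = (σ * (1 - w')) • Qd y := fun y => rfl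
  -- pointwise decomposition
  have hpt : ∀ ω, Qd (M (A w (X ω)) + b + σ • A w' (η ω)) = U ω + V ω := by
    intro ω
    rw [Qd_add, Qd_add, Qd_smul, Qd_A hk]
    have hM : Qd (M (A w (X ω))) = Qd (M (Qc (X ω))) + (1 - w) • Qd (M (Qd (X ω))) := by
      rw [A_eq w (X ω), M.map_add, M.map_smul, Qd_add, Qd_smul]
    rw [hM]
    show _ = (TU (X ω) + Qd b) + TV (η ω)
    rw [hUdef, hVdef, smul_smul]
  -- MemLp facts
  have hU2 : MemLp U 2 P := (memℒp_comp_lm P hX TU).add (memLp_const _)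
  have hV2 : MemLp V 2 P := memℒp_comp_lm P hη TV
  have InU : Integrable (fun ω => norm2 (U ω) ^ 2) P := integrable_norm2_sq P hU2
  have InV : Integrable (fun ω => norm2 (V ω) ^ 2) P := integrable_norm2_sq P hV2
  have hUmem : ∀ (i : Fin (m * k)) (j : Fin (n * k)),
      MemLp (fun ω => U ω i j) 2 P := fun i j => memℒp_comp_lm P hU2 (evalLM m n k i j)
  have hVmem : ∀ (i : Fin (m * k)) (j : Fin (n * k)),
      MemLp (fun ω => V ω i j) 2 P := fun i j => memℒp_comp_lm P hV2 (evalLM m n k i j)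
  -- component independence
  have hind : ∀ (i : Fin (m * k)) (j : Fin (n * k)),
      ProbabilityTheory.IndepFun (fun ω => U ω i j) (fun ω => V ω i j) P := by
    intro i j
    have hTUc : Continuous TU := TU.continuous_of_finiteDimensional
    have hTVc : Continuous TV := TV.continuous_of_finiteDimensional
    have hφ : Measurable fun x : H m n k => TU x i j + Qd b i j :=
      (((continuous_apply j).comp ((continuous_apply i).comp hTUc)).add
        continuous_const).measurable
    have hψ : Measurable fun x : H m n k => TV x i j :=
      ((continuous_apply j).comp ((continuous_apply i).comp hTVc)).measurable
    exact hindep.symm.comp hφ hψ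
  -- cross term
  have hcreq : (fun ω => ip (U ω) (V ω)) = fun ω => ∑ i, ∑ j, U ω i j * V ω i j := rfl
  have Icrij : ∀ (i : Fin (m * k)) (j : Fin (n * k)),
      Integrable (fun ω => U ω i j * V ω i j) P := fun i j =>
    (hind i j).integrable_mul ((hUmem i j).integrable one_le_two)
      ((hVmem i j).integrable one_le_two)
  have Icr : Integrable (fun ω => ip (U ω) (V ω)) P := by
    rw [hcreq]
    exact integrable_finset_sum _ fun i _ => integrable_finset_sum _ fun j _ => Icrij i j
  have hVint0 : ∀ (i : Fin (m * k)) (j : Fin (n * k)), ∫ ω, V ω i j ∂P = 0 := by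
    intro i j
    set L := LinearMap.toContinuousLinearMap ((evalLM m n k i j).comp TV) with hL
    have h1 : ∫ ω, V ω i j ∂P = ∫ ω, L (η ω) ∂P := rfl
    rw [h1, L.integral_comp_comm (hη.integrable one_le_two), hη0, map_zero]
  have hcr0 : ∫ ω, ip (U ω) (V ω) ∂P = 0 := by
    rw [hcreq, integral_finset_sum _ fun i _ =>
      integrable_finset_sum _ fun j _ => Icrij i j]
    refine Finset.sum_eq_zero fun i _ => ?_
    rw [integral_finset_sum _ fun j _ => Icrij i j]
    refine Finset.sum_eq_zero fun j _ => ?_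
    have := (hind i j).integral_fun_mul_eq_mul_integral ((hUmem i j).integrable one_le_two).aestronglyMeasurable
      ((hVmem i j).integrable one_le_two).aestronglyMeasurable
    calc ∫ ω, U ω i j * V ω i j ∂P
        = (∫ ω, U ω i j ∂P) * ∫ ω, V ω i j ∂P := this
      _ = 0 := by rw [hVint0 i j, mul_zero]
  -- split the integral
  have hsplit : ∫ ω, norm2 (Qd (M (A w (X ω)) + b + σ • A w' (η ω))) ^ 2 ∂P
      = (∫ ω, norm2 (U ω) ^ 2 ∂P) + ∫ ω, norm2 (V ω) ^ 2 ∂P := by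
    have h1 : (fun ω => norm2 (Qd (M (A w (X ω)) + b + σ • A w' (η ω))) ^ 2)
        = fun ω => norm2 (U ω) ^ 2 + 2 * ip (U ω) (V ω) + norm2 (V ω) ^ 2 :=
      funext fun ω => by rw [hpt ω, norm2_sq_add]
    have Isum : Integrable (fun ω => norm2 (U ω) ^ 2 + 2 * ip (U ω) (V ω)) P :=
      InU.add (Icr.const_mul 2)
    rw [h1, integral_add Isum InV, integral_add InU (Icr.const_mul 2),
      integral_const_mul, hcr0, mul_zero, add_zero]
  -- bound on U
  have hbd : ∀ ω, norm2 (U ω) ^ 2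
      ≤ 3 * κ ^ 2 * norm2 (Qc (X ω)) ^ 2 + 3 * ρ ^ 2 * (1 - w) ^ 2 * norm2 (Qd (X ω)) ^ 2
        + 3 * norm2 (Qd b) ^ 2 := by
    intro ω
    have hUo : U ω = Qd (M (Qc (X ω))) + (1 - w) • Qd (M (Qd (X ω))) + Qd b := by
      rw [hU]; simp only; rw [hUdef]
    have h1 : norm2 (U ω) ≤ norm2 (Qd (M (Qc (X ω))))
        + norm2 ((1 - w) • Qd (M (Qd (X ω)))) + norm2 (Qd b) := by
      rw [hUo]
      exact le_trans (norm2_add_le _ _) (add_le_add_left (norm2_add_le _ _) _)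
    have ha := hκ (X ω)
    have hc : norm2 ((1 - w) • Qd (M (Qd (X ω))))
        ≤ (1 - w) * (ρ * norm2 (Qd (X ω))) := by
      rw [norm2_smul, abs_of_nonneg (by linarith : (0:ℝ) ≤ 1 - w)]
      exact mul_le_mul_of_nonneg_left (hρ (X ω)) (by linarith)
    have hκn : 0 ≤ κ * norm2 (Qc (X ω)) := le_trans (norm2_nonneg _) ha
    have hρn : 0 ≤ (1 - w) * (ρ * norm2 (Qd (X ω))) := le_trans (norm2_nonneg _) hc
    have hdn : 0 ≤ norm2 (Qd b) := norm2_nonneg _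
    have hu0 : 0 ≤ norm2 (U ω) := norm2_nonneg _
    have h2 : norm2 (U ω) ≤ κ * norm2 (Qc (X ω)) + (1 - w) * (ρ * norm2 (Qd (X ω)))
        + norm2 (Qd b) := by linarith
    nlinarith [sq_nonneg (κ * norm2 (Qc (X ω)) - (1 - w) * (ρ * norm2 (Qd (X ω)))),
      sq_nonneg (κ * norm2 (Qc (X ω)) - norm2 (Qd b)),
      sq_nonneg ((1 - w) * (ρ * norm2 (Qd (X ω))) - norm2 (Qd b)),
      mul_le_mul h2 h2 hu0 (by positivity)]
  -- integrate the bound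
  have hg1 : MemLp (fun ω => Qc (X ω)) 2 P := memℒp_comp_lm P hX (SL m n k)
  have hg2 : MemLp (fun ω => Qd (X ω)) 2 P := memℒp_comp_lm P hX (QdL m n k)
  have hg3 : MemLp (fun ω => Qd (η ω)) 2 P := memℒp_comp_lm P hη (QdL m n k)
  have IG1 := integrable_norm2_sq P hg1
  have IG2 := integrable_norm2_sq P hg2
  have IG3 := integrable_norm2_sq P hg3
  have hUle : ∫ ω, norm2 (U ω) ^ 2 ∂P
      ≤ 3 * κ ^ 2 * (∫ ω, norm2 (Qc (X ω)) ^ 2 ∂P)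
        + 3 * ρ ^ 2 * (1 - w) ^ 2 * (∫ ω, norm2 (Qd (X ω)) ^ 2 ∂P)
        + 3 * norm2 (Qd b) ^ 2 := by
    have h := integral_mono InU
      (((IG1.const_mul (3 * κ ^ 2)).add (IG2.const_mul (3 * ρ ^ 2 * (1 - w) ^ 2))).add
        (integrable_const _)) hbd
    have I12 : Integrable (fun ω => 3 * κ ^ 2 * norm2 (Qc (X ω)) ^ 2
        + 3 * ρ ^ 2 * (1 - w) ^ 2 * norm2 (Qd (X ω)) ^ 2) P :=
      (IG1.const_mul _).add (IG2.const_mul _)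
    simp only [Pi.add_apply] at h
    rwa [integral_add I12 (integrable_const _),
      integral_add (IG1.const_mul _) (IG2.const_mul _), integral_const_mul,
      integral_const_mul, integral_const, probReal_univ, one_smul] at h
  -- V integral
  have hVeq : ∫ ω, norm2 (V ω) ^ 2 ∂P
      = σ ^ 2 * (1 - w') ^ 2 * ∫ ω, norm2 (Qd (η ω)) ^ 2 ∂P := by
    have h1 : (fun ω => norm2 (V ω) ^ 2)
        = fun ω => σ ^ 2 * (1 - w') ^ 2 * norm2 (Qd (η ω)) ^ 2 := by
      funext ω
      rw [hV]; simp only; rw [hVdef, norm2_smul, mul_pow, sq_abs]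
      ring
    rw [h1, integral_const_mul]
  rw [hsplit, hVeq]
  linarith

end Stroke
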